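/- Let n and d be odd positive integers with (n+1)/2 ≤ d ≤ n. If (n, d) ∉ {(5, 3), (9, 5)}, then hmin(n, d) = (d+1)/2; moreover, hmin(5, 3) = 3 and hmin(9, 5) = 4. Equivalently, hmin(n, d) = (d+1)/2 + [(n, d) ∈ {(5,3), (9,5)}], where [·] is 1 if the condition holds and 0 otherwise. -/

import Mathlib

open Finset
open scoped Classical

/-- The closed neighborhood `N[v] = {v} ∪ N(v)` of a vertex `v` in a simple graph `G`.
A `d`-regular graph with loops is modeled by a simple graph in which every
closed neighborhood has size `d`. -/
noncomputable def closedNbhd {n : ℕ} (G : SimpleGraph (Fin n)) (v : Fin n) : Finset (Fin n) :=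
  Finset.univ.filter fun u => u = v ∨ G.Adj v u

/-- A configuration with parameters `(n, d, h)`: a simple graph `G` on `n` vertices all
of whose closed neighborhoods have size `d` (i.e. a `d`-regular graph with loops),
together with an opinion function `f : V → {1, -1}` having exactly `h` happy vertices. -/
def IsConfig {n : ℕ} (d h : ℕ) (G : SimpleGraph (Fin n)) (f : Fin n → ℤ) : Prop :=
  (∀ v, (closedNbhd G v).card = d) ∧ (∀ v, f v = 1 ∨ f v = -1) ∧
  (Finset.univ.filter fun v => f v = 1).card = h

/-- The number of proponents: vertices `v` with `∑_{u ∈ N[v]} f u ≥ 1`. -/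
noncomputable def numProponents {n : ℕ} (G : SimpleGraph (Fin n)) (f : Fin n → ℤ) : ℕ :=
  (Finset.univ.filter fun v => 1 ≤ ∑ u ∈ closedNbhd G v, f u).card

/-- A configuration is approving if more than `n/2` of its vertices are proponents. -/
def IsApproving {n : ℕ} (G : SimpleGraph (Fin n)) (f : Fin n → ℤ) : Prop :=
  2 * numProponents G f > n

/-- `hmin n d`: the least `h` for which an approving configuration with parameters
`(n, d, h)` exists. -/
noncomputable def hmin (n d : ℕ) : ℕ :=
  sInf {h : ℕ | ∃ (G : SimpleGraph (Fin n)) (f : Fin n → ℤ), IsConfig d h G f ∧ IsApproving G f}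

/-- `hmax n d`: the greatest `h ≤ n` for which a disapproving configuration with parameters
`(n, d, h)` exists. -/
noncomputable def hmax (n d : ℕ) : ℕ :=
  sSup {h : ℕ | h ≤ n ∧
    ∃ (G : SimpleGraph (Fin n)) (f : Fin n → ℤ), IsConfig d h G f ∧ ¬ IsApproving G f}

/-- `hminN n`: the minimum of `hmin n d` over odd `d` with `1 ≤ d ≤ n`. -/
noncomputable def hminN (n : ℕ) : ℕ :=
  sInf {m : ℕ | ∃ d : ℕ, Odd d ∧ 1 ≤ d ∧ d ≤ n ∧ m = hmin n d}

set_option maxHeartbeats 1600000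

section Helpers

set_option linter.unusedSectionVars false

variable {V W : Type*} [Fintype V] [DecidableEq V] [Fintype W] [DecidableEq W]

lemma pm_sum (s : Finset V) (f : V → ℤ) (hf : ∀ v ∈ s, f v = 1 ∨ f v = -1) :
    ∑ u ∈ s, f u = 2 * ((s.filter fun u => f u = 1).card : ℤ) - s.card := by
  rw [← Finset.sum_filter_add_sum_filter_not s (fun u => f u = 1) f]
  have h1 : ∑ u ∈ s.filter (fun u => f u = 1), f u
      = ((s.filter fun u => f u = 1).card : ℤ) := by
    rw [Finset.sum_congr rfl (fun u hu => (Finset.mem_filter.mp hu).2)]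
    simp
  have h2 : ∑ u ∈ s.filter (fun u => ¬ f u = 1), f u
      = -(((s.filter fun u => ¬ f u = 1).card : ℤ)) := by
    have : ∀ u ∈ s.filter (fun u => ¬ f u = 1), f u = -1 := by
      intro u hu
      rcases Finset.mem_filter.mp hu with ⟨hus, hu1⟩
      rcases hf u hus with h | h
      · exact absurd h hu1
      · exact h
    rw [Finset.sum_congr rfl this]
    simp
  have h3 : (s.filter fun u => f u = 1).card + (s.filter fun u => ¬ f u = 1).card = s.card :=
    Finset.card_filter_add_card_filter_not _
  rw [h1, h2]
  have := congrArg (Nat.cast : ℕ → ℤ) h3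
  push_cast at this ⊢
  linarith

lemma mem_configSet {N d h : ℕ}
    (hcard : Fintype.card V = N) (G₀ : SimpleGraph V) (f₀ : V → ℤ)
    (h1 : ∀ v : V, (Finset.univ.filter fun u => u = v ∨ G₀.Adj v u).card = d)
    (h2 : ∀ v, f₀ v = 1 ∨ f₀ v = -1)
    (h3 : (Finset.univ.filter fun v => f₀ v = 1).card = h)
    (h4 : N < 2 * (Finset.univ.filter fun v : V =>
        1 ≤ ∑ u ∈ Finset.univ.filter (fun u => u = v ∨ G₀.Adj v u), f₀ u).card) :
    ∃ (G : SimpleGraph (Fin N)) (f : Fin N → ℤ), IsConfig d h G f ∧ IsApproving G f := by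
  set e : V ≃ Fin N := Fintype.equivFinOfCardEq hcard with he
  refine ⟨SimpleGraph.comap e.symm G₀, f₀ ∘ e.symm, ?_, ?_⟩
  case _ =>
    have key : ∀ a : Fin N, closedNbhd (SimpleGraph.comap e.symm G₀) a
        = (Finset.univ.filter fun u => u = e.symm a ∨ G₀.Adj (e.symm a) u).map e.toEmbedding := by
      intro a
      ext u
      simp only [closedNbhd, Finset.mem_filter, Finset.mem_univ, true_and, Finset.mem_map,
        Equiv.coe_toEmbedding, SimpleGraph.comap_adj]
      constructor
      · intro h
        refine ⟨e.symm u, ?_, by simp⟩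
        rcases h with rfl | hadj
        · left; rfl
        · right; exact hadj
      · rintro ⟨v, hv, rfl⟩
        rcases hv with rfl | hadj
        · left; simp
        · right; simpa using hadj
    have keysum : ∀ a : Fin N, ∑ u ∈ closedNbhd (SimpleGraph.comap e.symm G₀) a, (f₀ ∘ e.symm) u
        = ∑ u ∈ Finset.univ.filter (fun u => u = e.symm a ∨ G₀.Adj (e.symm a) u), f₀ u := by
      intro a
      rw [key a, Finset.sum_map]
      exact Finset.sum_congr rfl fun u _ => by simp
    constructor
    · intro a; rw [key a, Finset.card_map]; exact h1 _
    constructor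
    · intro a; exact h2 _
    · have : (Finset.univ.filter fun v : Fin N => (f₀ ∘ e.symm) v = 1)
          = (Finset.univ.filter fun v : V => f₀ v = 1).map e.toEmbedding := by
        ext u
        simp only [Finset.mem_filter, Finset.mem_univ, true_and, Finset.mem_map,
          Equiv.coe_toEmbedding, Function.comp]
        constructor
        · intro h; exact ⟨e.symm u, h, by simp⟩
        · rintro ⟨v, hv, rfl⟩; simpa using hv
      rw [this, Finset.card_map]; exact h3
  case _ =>
    have key : ∀ a : Fin N, closedNbhd (SimpleGraph.comap e.symm G₀) a
        = (Finset.univ.filter fun u => u = e.symm a ∨ G₀.Adj (e.symm a) u).map e.toEmbedding := by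
      intro a
      ext u
      simp only [closedNbhd, Finset.mem_filter, Finset.mem_univ, true_and, Finset.mem_map,
        Equiv.coe_toEmbedding, SimpleGraph.comap_adj]
      constructor
      · intro h
        refine ⟨e.symm u, ?_, by simp⟩
        rcases h with rfl | hadj
        · left; rfl
        · right; exact hadj
      · rintro ⟨v, hv, rfl⟩
        rcases hv with rfl | hadj
        · left; simp
        · right; simpa using hadj
    have keysum : ∀ a : Fin N, ∑ u ∈ closedNbhd (SimpleGraph.comap e.symm G₀) a, (f₀ ∘ e.symm) u
        = ∑ u ∈ Finset.univ.filter (fun u => u = e.symm a ∨ G₀.Adj (e.symm a) u), f₀ u := by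
      intro a
      rw [key a, Finset.sum_map]
      exact Finset.sum_congr rfl fun u _ => by simp
    unfold IsApproving numProponents
    have : (Finset.univ.filter fun a : Fin N =>
          1 ≤ ∑ u ∈ closedNbhd (SimpleGraph.comap e.symm G₀) a, (f₀ ∘ e.symm) u)
        = (Finset.univ.filter fun v : V =>
          1 ≤ ∑ u ∈ Finset.univ.filter (fun u => u = v ∨ G₀.Adj v u), f₀ u).map e.toEmbedding := by
      ext a
      simp only [Finset.mem_filter, Finset.mem_univ, true_and, Finset.mem_map,
        Equiv.coe_toEmbedding]
      constructor
      · intro h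
        exact ⟨e.symm a, by rwa [keysum a] at h, by simp⟩
      · rintro ⟨v, hv, rfl⟩
        rw [keysum]
        simpa using hv
    rw [this, Finset.card_map]
    exact h4

end Helpers
-- key lemma: a proponent hosts ≥ (d+1)/2 happy vertices in its closed nbhd
lemma prop_happy {n d h : ℕ} {G : SimpleGraph (Fin n)} {f : Fin n → ℤ}
    (hc : IsConfig d h G f) {v : Fin n} (hv : 1 ≤ ∑ u ∈ closedNbhd G v, f u) :
    d + 1 ≤ 2 * ((closedNbhd G v).filter fun u => f u = 1).card := by
  obtain ⟨hreg, hpm, _⟩ := hc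
  have := pm_sum (closedNbhd G v) f (fun u _ => hpm u)
  rw [this, hreg v] at hv
  have : (d : ℤ) + 1 ≤ 2 * (((closedNbhd G v).filter fun u => f u = 1).card : ℤ) := by linarith
  exact_mod_cast this

lemma happy_le {n d h : ℕ} {G : SimpleGraph (Fin n)} {f : Fin n → ℤ}
    (hc : IsConfig d h G f) (v : Fin n) :
    ((closedNbhd G v).filter fun u => f u = 1).card ≤ h := by
  obtain ⟨_, _, hh⟩ := hc
  rw [← hh]
  exact Finset.card_le_card (Finset.filter_subset_filter _ (Finset.subset_univ _))

-- existence of a proponent from approving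
lemma exists_proponent {n : ℕ} {G : SimpleGraph (Fin n)} {f : Fin n → ℤ} (hnpos : 0 < n)
    (ha : IsApproving G f) : ∃ v, 1 ≤ ∑ u ∈ closedNbhd G v, f u := by
  have : 0 < numProponents G f := by unfold IsApproving at ha; omega
  obtain ⟨v, hv⟩ := Finset.card_pos.mp this
  exact ⟨v, (Finset.mem_filter.mp hv).2⟩

lemma lower_bound {n d h : ℕ} (hnpos : 0 < n) {G : SimpleGraph (Fin n)} {f : Fin n → ℤ}
    (hc : IsConfig d h G f) (ha : IsApproving G f) : (d + 1) / 2 ≤ h := by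
  obtain ⟨v, hv⟩ := exists_proponent hnpos ha
  have h1 := prop_happy hc hv
  have h2 := happy_le hc v
  omega

section ZHelpers
set_option linter.unusedSectionVars false

def ballRel (t σ : ℕ) [NeZero t] (x y : ZMod t) : Prop :=
  (y - x).val ≤ σ ∨ (x - y).val ≤ σ

lemma ballRel_refl (t σ : ℕ) [NeZero t] (x : ZMod t) : ballRel t σ x x := by
  left; simp [ballRel]

lemma card_filter_sum_type {α β : Type*} [Fintype α] [Fintype β] (p : α ⊕ β → Prop)
    [DecidablePred p] [DecidablePred fun a => p (Sum.inl a)]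
    [DecidablePred fun b => p (Sum.inr b)] :
    (Finset.univ.filter p).card
      = (Finset.univ.filter fun a => p (Sum.inl a)).card
        + (Finset.univ.filter fun b => p (Sum.inr b)).card := by
  rw [Finset.card_filter, Finset.card_filter, Finset.card_filter, Fintype.sum_sum_type]
  congr 1 <;> apply Finset.sum_congr rfl <;> intro i _ <;> congr!

lemma sum_filter_sum_type {α β : Type*} [Fintype α] [Fintype β] (p : α ⊕ β → Prop)
    [DecidablePred p] [DecidablePred fun a => p (Sum.inl a)]
    [DecidablePred fun b => p (Sum.inr b)] (f : α ⊕ β → ℤ) :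
    ∑ u ∈ Finset.univ.filter p, f u
      = ∑ a ∈ Finset.univ.filter (fun a => p (Sum.inl a)), f (Sum.inl a)
        + ∑ b ∈ Finset.univ.filter (fun b => p (Sum.inr b)), f (Sum.inr b) := by
  rw [Finset.sum_filter, Finset.sum_filter, Finset.sum_filter, Fintype.sum_sum_type]
  congr 1 <;> apply Finset.sum_congr rfl <;> intro i _ <;> congr!

end ZHelpers
-- count of val < k in ZMod t
lemma zmod_count (t k : ℕ) [NeZero t] (hk : k ≤ t) :
    (Finset.univ.filter fun x : ZMod t => x.val < k).card = k := by
  suffices h : (Finset.univ.filter fun x : ZMod t => x.val < k).card = (Finset.range k).card by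
    simpa using h
  refine Finset.card_nbij' (fun x => x.val) (fun i => (i : ZMod t)) ?_ ?_ ?_ ?_
  · intro x hx
    simp only [Finset.mem_coe, Finset.mem_filter] at hx
    simpa using hx.2
  · intro i hi
    simp only [Finset.mem_coe, Finset.mem_range] at hi
    simp only [Finset.mem_coe, Finset.mem_filter, Finset.mem_univ, true_and]
    rwa [ZMod.val_cast_of_lt (lt_of_lt_of_le hi hk)]
  · intro x hx
    exact ZMod.natCast_rightInverse.injective (by simp [ZMod.natCast_val])
  · intro i hi
    simp only [Finset.mem_coe, Finset.mem_range] at hi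
    exact ZMod.val_cast_of_lt (lt_of_lt_of_le hi hk)

-- closed ball in the cyclic structure
lemma zmod_ball (t σ : ℕ) [NeZero t] (ht : 2*σ + 1 ≤ t) (x : ZMod t) :
    (Finset.univ.filter fun y : ZMod t => ballRel t σ x y).card = 2*σ + 1 := by
  have htpos : 0 < t := by omega
  have hcard : ((Finset.Icc 0 σ) ∪ (Finset.Icc (t - σ) (t-1)) : Finset ℕ).card = 2*σ+1 := by
    rw [Finset.card_union_of_disjoint]
    · rw [Nat.card_Icc, Nat.card_Icc]; omega
    · rw [Finset.disjoint_left]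
      intro a ha hb
      simp only [Finset.mem_Icc] at ha hb
      omega
  rw [← hcard]
  refine Finset.card_nbij' (fun y => (y - x).val) (fun c => x + (c : ZMod t)) ?_ ?_ ?_ ?_
  · intro y hy
    simp only [Finset.mem_coe, Finset.mem_filter, Finset.mem_univ, true_and] at hy
    simp only [Finset.mem_coe, Finset.mem_union, Finset.mem_Icc]
    rcases hy with h | h
    · left; omega
    · by_cases h0 : y - x = 0
      · left; simp [h0]
      · right
        have hv : (x - y).val = t - (y - x).val := by
          have hxy : x - y = -(y - x) := by ring
          rw [hxy, ZMod.neg_val, if_neg h0]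
        have hlt : (y - x).val < t := ZMod.val_lt _
        have hne : (y - x).val ≠ 0 := by
          intro hc; exact h0 (by rwa [← ZMod.val_eq_zero])
        omega
  · intro c hc
    simp only [Finset.mem_coe, Finset.mem_union, Finset.mem_Icc] at hc
    simp only [Finset.mem_coe, Finset.mem_filter, Finset.mem_univ, true_and]
    have hclt : c < t := by omega
    have hval : ((c : ZMod t)).val = c := ZMod.val_cast_of_lt hclt
    have hsub : (x + (c:ZMod t) - x) = (c : ZMod t) := by ring
    rcases hc with h | h
    · exact Or.inl (by show (x + (c:ZMod t) - x).val ≤ σ; rw [hsub, hval]; omega)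
    · have hne : (c : ZMod t) ≠ 0 := by
        intro hzero
        rw [hzero] at hval
        simp only [ZMod.val_zero] at hval
        omega
      refine Or.inr ?_
      show (x - (x + (c:ZMod t))).val ≤ σ
      have hng : (x - (x + (c:ZMod t))) = -(c : ZMod t) := by ring
      rw [hng, ZMod.neg_val, if_neg hne, hval]
      omega
  · intro y hy
    have h5 : ((( y - x).val : ZMod t)) = y - x := ZMod.natCast_val _ |>.trans (ZMod.cast_id _ _)
    show x + (((y - x).val : ℕ) : ZMod t) = y
    rw [h5]; ring
  · intro c hc
    simp only [Finset.mem_coe, Finset.mem_union, Finset.mem_Icc] at hc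
    have hclt : c < t := by omega
    have hsub : (x + (c:ZMod t) - x) = (c : ZMod t) := by ring
    show (x + (c:ZMod t) - x).val = c
    rw [hsub]; exact ZMod.val_cast_of_lt hclt

lemma zmod_coball (t σ : ℕ) [NeZero t] (ht : 2*σ + 1 ≤ t) (x : ZMod t) :
    (Finset.univ.filter fun y : ZMod t => y = x ∨ ¬ ballRel t σ x y).card = t - 2*σ := by
  have hsplit := Finset.card_filter_add_card_filter_not
    (s := (Finset.univ : Finset (ZMod t)))
    (p := fun y : ZMod t => y = x ∨ ¬ ballRel t σ x y)
  have hneg : (Finset.univ.filter fun y : ZMod t => ¬(y = x ∨ ¬ ballRel t σ x y))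
      = (Finset.univ.filter fun y : ZMod t => ballRel t σ x y).erase x := by
    ext y
    simp only [Finset.mem_filter, Finset.mem_univ, true_and, Finset.mem_erase, not_or, not_not]
    all_goals tauto
  have hx : x ∈ (Finset.univ.filter fun y : ZMod t => ballRel t σ x y) := by
    simp only [Finset.mem_filter, Finset.mem_univ, true_and]
    exact ballRel_refl t σ x
  have hcard2 : (Finset.univ.filter fun y : ZMod t => ¬(y = x ∨ ¬ ballRel t σ x y)).card
      = 2*σ := by
    rw [hneg, Finset.card_erase_of_mem hx, zmod_ball t σ ht x]
    omega
  have hcardu : (Finset.univ : Finset (ZMod t)).card = t := by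
    simp [ZMod.card]
  omega

-- happiness function on a ZMod component
noncomputable def happyFun (t k : ℕ) [NeZero t] : ZMod t → ℤ :=
  fun x => if x.val < k then 1 else -1

lemma happyFun_count (t k : ℕ) [NeZero t] (hk : k ≤ t) :
    (Finset.univ.filter fun x : ZMod t => happyFun t k x = 1).card = k := by
  have heq : (Finset.univ.filter fun x : ZMod t => happyFun t k x = 1)
      = (Finset.univ.filter fun x : ZMod t => x.val < k) := by
    apply Finset.filter_congr
    intro x _
    unfold happyFun
    constructor
    · intro h
      by_contra hc
      rw [if_neg hc] at h
      norm_num at h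
    · intro h; rw [if_pos h]
  rw [heq]
  exact zmod_count t k hk

lemma happyFun_sum (t k : ℕ) [NeZero t] (hk : k ≤ t) :
    ∑ x : ZMod t, happyFun t k x = 2 * (k : ℤ) - t := by
  rw [pm_sum Finset.univ (happyFun t k) (fun v _ => by unfold happyFun; split <;> simp)]
  rw [happyFun_count t k hk]
  simp [ZMod.card]

/-- Construction B as a graph on `ZMod m ⊕ ZMod (m+1)`. -/
def badB (m σ : ℕ) [NeZero m] : (ZMod m ⊕ ZMod (m+1)) → (ZMod m ⊕ ZMod (m+1)) → Prop
  | Sum.inl x, Sum.inl y => ballRel m σ x y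
  | Sum.inr x, Sum.inr y => ballRel (m+1) σ x y
  | _, _ => False

def GB (m σ : ℕ) [NeZero m] : SimpleGraph (ZMod m ⊕ ZMod (m+1)) where
  Adj u v := u ≠ v ∧ ¬ badB m σ u v
  symm := by
    constructor
    rintro (x|x) (y|y) ⟨h1, h2⟩ <;>
      exact ⟨fun h => h1 h.symm, fun h => h2 (by cases h <;> simp [badB] at * <;> tauto)⟩
  loopless := ⟨by rintro (x|x) ⟨h1, _⟩ <;> exact h1 rfl⟩

lemma card_filter_congr {α : Type*} [Fintype α] (p q : α → Prop)
    [DecidablePred p] [DecidablePred q] (H : ∀ x, p x ↔ q x) :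
    (Finset.univ.filter p).card = (Finset.univ.filter q).card := by
  congr 1
  exact Finset.filter_congr (fun x _ => H x)

lemma memB (m c : ℕ) (hc1 : m + 2 ≤ 2*c + 1) (hc2 : 2*c + 1 ≤ 2*m - 1) (hm0 : 1 ≤ m) :
    ∃ (G : SimpleGraph (Fin (2*m+1))) (f : Fin (2*m+1) → ℤ),
      IsConfig (2*c+1) (c+1) G f ∧ IsApproving G f := by
  have hm : 3 ≤ m := by omega
  haveI : NeZero m := ⟨by omega⟩
  set σ := m - c with hσdef
  have hσ1 : 1 ≤ σ := by omega
  have hσm : 2*σ + 1 ≤ m := by omega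
  have hσm1 : 2*σ + 1 ≤ m + 1 := by omega
  have hkm : c + 1 ≤ m := by omega
  set f₀ : (ZMod m ⊕ ZMod (m+1)) → ℤ :=
    Sum.elim (happyFun m (c+1)) (fun _ => -1) with hf₀
  refine mem_configSet ?_ (GB m σ) f₀ ?_ ?_ ?_ ?_
  · simp [ZMod.card]; omega
  · -- degrees
    intro v
    rcases v with x | x
    · have hsplit : (Finset.univ.filter fun u => u = Sum.inl x ∨ (GB m σ).Adj (Sum.inl x) u).card
          = (Finset.univ.filter fun a : ZMod m =>
              (Sum.inl a : ZMod m ⊕ ZMod (m+1)) = Sum.inl x ∨ (GB m σ).Adj (Sum.inl x) (Sum.inl a)).card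
            + (Finset.univ.filter fun b : ZMod (m+1) =>
              (Sum.inr b : ZMod m ⊕ ZMod (m+1)) = Sum.inl x ∨ (GB m σ).Adj (Sum.inl x) (Sum.inr b)).card :=
        by exact card_filter_sum_type _
      have e1 : (Finset.univ.filter fun a : ZMod m =>
          (Sum.inl a : ZMod m ⊕ ZMod (m+1)) = Sum.inl x ∨ (GB m σ).Adj (Sum.inl x) (Sum.inl a)).card = m - 2*σ := by
        refine (card_filter_congr _ _ ?_).trans (zmod_coball m σ hσm x)
        intro a
        constructor
        · rintro (h | ⟨h1, h2⟩)
          · left; exact Sum.inl.inj h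
          · right; exact h2
        · rintro (rfl | h)
          · left; rfl
          · right
            refine ⟨fun hc => h (by cases Sum.inl.inj hc; exact ballRel_refl m σ x), h⟩
      have e2 : (Finset.univ.filter fun b : ZMod (m+1) =>
          (Sum.inr b : ZMod m ⊕ ZMod (m+1)) = Sum.inl x ∨ (GB m σ).Adj (Sum.inl x) (Sum.inr b)).card = m + 1 := by
        have huniv : (Finset.univ.filter fun b : ZMod (m+1) =>
            (Sum.inr b : ZMod m ⊕ ZMod (m+1)) = Sum.inl x ∨ (GB m σ).Adj (Sum.inl x) (Sum.inr b)) = Finset.univ := by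
          ext b
          simp only [Finset.mem_filter, Finset.mem_univ, true_and, iff_true]
          right
          exact ⟨by simp, by simp [badB]⟩
        rw [huniv]; simp [ZMod.card]
      rw [hsplit, e1, e2]; omega
    · have hsplit : (Finset.univ.filter fun u => u = Sum.inr x ∨ (GB m σ).Adj (Sum.inr x) u).card
          = (Finset.univ.filter fun a : ZMod m =>
              (Sum.inl a : ZMod m ⊕ ZMod (m+1)) = Sum.inr x ∨ (GB m σ).Adj (Sum.inr x) (Sum.inl a)).card
            + (Finset.univ.filter fun b : ZMod (m+1) =>
              (Sum.inr b : ZMod m ⊕ ZMod (m+1)) = Sum.inr x ∨ (GB m σ).Adj (Sum.inr x) (Sum.inr b)).card :=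
        by exact card_filter_sum_type _
      have e1 : (Finset.univ.filter fun a : ZMod m =>
          (Sum.inl a : ZMod m ⊕ ZMod (m+1)) = Sum.inr x ∨ (GB m σ).Adj (Sum.inr x) (Sum.inl a)).card = m := by
        have huniv : (Finset.univ.filter fun a : ZMod m =>
            (Sum.inl a : ZMod m ⊕ ZMod (m+1)) = Sum.inr x ∨ (GB m σ).Adj (Sum.inr x) (Sum.inl a)) = Finset.univ := by
          ext a
          simp only [Finset.mem_filter, Finset.mem_univ, true_and, iff_true]
          right
          exact ⟨by simp, by simp [badB]⟩
        rw [huniv]; simp [ZMod.card]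
      have e2 : (Finset.univ.filter fun b : ZMod (m+1) =>
          (Sum.inr b : ZMod m ⊕ ZMod (m+1)) = Sum.inr x ∨ (GB m σ).Adj (Sum.inr x) (Sum.inr b)).card = (m+1) - 2*σ := by
        refine (card_filter_congr _ _ ?_).trans (zmod_coball (m+1) σ hσm1 x)
        intro b
        constructor
        · rintro (h | ⟨h1, h2⟩)
          · left; exact Sum.inr.inj h
          · right; exact h2
        · rintro (rfl | h)
          · left; rfl
          · right
            refine ⟨fun hc => h (by cases Sum.inr.inj hc; exact ballRel_refl (m+1) σ x), h⟩
      rw [hsplit, e1, e2]; omega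
  · rintro (x|x)
    · rcases (show happyFun m (c+1) x = 1 ∨ happyFun m (c+1) x = -1 by
        unfold happyFun; split
        · left; rfl
        · right; rfl) with h | h
      · left; exact h
      · right; exact h
    · right; rfl
  · have hsplit : (Finset.univ.filter fun v => f₀ v = 1).card
        = (Finset.univ.filter fun a : ZMod m => f₀ (Sum.inl a) = 1).card
          + (Finset.univ.filter fun b : ZMod (m+1) => f₀ (Sum.inr b) = 1).card :=
      by exact card_filter_sum_type _
    have e1 : (Finset.univ.filter fun a : ZMod m => f₀ (Sum.inl a) = 1).card = c + 1 := by
      refine (card_filter_congr _ _ ?_).trans (happyFun_count m (c+1) hkm)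
      intro a
      rw [hf₀]
      simp
    have e2 : (Finset.univ.filter fun b : ZMod (m+1) => f₀ (Sum.inr b) = 1).card = 0 := by
      rw [Finset.card_eq_zero]
      apply Finset.filter_false_of_mem
      intro b _
      rw [hf₀]; simp
    rw [hsplit, e1, e2]
  · -- approving: every inr vertex is a proponent
    have key : ∀ x : ZMod (m+1),
        1 ≤ ∑ u ∈ Finset.univ.filter
          (fun u => u = Sum.inr x ∨ (GB m σ).Adj (Sum.inr x) u), f₀ u := by
      intro x
      have hsplit : ∑ u ∈ Finset.univ.filter
            (fun u => u = Sum.inr x ∨ (GB m σ).Adj (Sum.inr x) u), f₀ u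
          = (∑ a ∈ Finset.univ.filter (fun a : ZMod m =>
              (Sum.inl a : ZMod m ⊕ ZMod (m+1)) = Sum.inr x ∨ (GB m σ).Adj (Sum.inr x) (Sum.inl a)), f₀ (Sum.inl a))
            + ∑ b ∈ Finset.univ.filter (fun b : ZMod (m+1) =>
              (Sum.inr b : ZMod m ⊕ ZMod (m+1)) = Sum.inr x ∨ (GB m σ).Adj (Sum.inr x) (Sum.inr b)), f₀ (Sum.inr b) :=
        by exact sum_filter_sum_type _ _
      rw [hsplit]
      have e1 : ∑ a ∈ Finset.univ.filter (fun a : ZMod m =>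
          (Sum.inl a : ZMod m ⊕ ZMod (m+1)) = Sum.inr x ∨ (GB m σ).Adj (Sum.inr x) (Sum.inl a)), f₀ (Sum.inl a)
          = 2 * ((c:ℤ)+1) - m := by
        have hset : (Finset.univ.filter fun a : ZMod m =>
            (Sum.inl a : ZMod m ⊕ ZMod (m+1)) = Sum.inr x ∨ (GB m σ).Adj (Sum.inr x) (Sum.inl a)) = Finset.univ := by
          ext a
          simp only [Finset.mem_filter, Finset.mem_univ, true_and, iff_true]
          right; exact ⟨by simp, by simp [badB]⟩
        rw [hset]
        have hs := happyFun_sum m (c+1) hkm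
        rw [hf₀]
        simpa using hs
      have e2 : ∑ b ∈ Finset.univ.filter (fun b : ZMod (m+1) =>
          (Sum.inr b : ZMod m ⊕ ZMod (m+1)) = Sum.inr x ∨ (GB m σ).Adj (Sum.inr x) (Sum.inr b)), f₀ (Sum.inr b)
          = -(((m+1) - 2*σ : ℕ) : ℤ) := by
        have hconst : ∀ b ∈ Finset.univ.filter (fun b : ZMod (m+1) =>
            (Sum.inr b : ZMod m ⊕ ZMod (m+1)) = Sum.inr x ∨ (GB m σ).Adj (Sum.inr x) (Sum.inr b)),
            f₀ (Sum.inr b) = -1 := by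
          intro b _; rw [hf₀]; rfl
        rw [Finset.sum_congr rfl hconst, Finset.sum_const]
        have ecard : (Finset.univ.filter fun b : ZMod (m+1) =>
            (Sum.inr b : ZMod m ⊕ ZMod (m+1)) = Sum.inr x ∨ (GB m σ).Adj (Sum.inr x) (Sum.inr b)).card
            = (m+1) - 2*σ := by
          refine (card_filter_congr _ _ ?_).trans (zmod_coball (m+1) σ hσm1 x)
          intro b
          constructor
          · rintro (h | ⟨h1, h2⟩)
            · left; exact Sum.inr.inj h
            · right; exact h2
          · rintro (rfl | h)
            · left; rfl
            · right
              refine ⟨fun hc => h (by cases Sum.inr.inj hc; exact ballRel_refl (m+1) σ x), h⟩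
        rw [ecard]
        simp
      rw [e1, e2]
      have hcast : (((m+1) - 2*σ : ℕ) : ℤ) = (m:ℤ) + 1 - 2*σ := by
        have : 2*σ ≤ m + 1 := by omega
        push_cast [Nat.cast_sub this]
        ring
      rw [hcast]
      have hσc : (σ:ℤ) = (m:ℤ) - c := by
        rw [hσdef]
        have : c ≤ m := by omega
        push_cast [Nat.cast_sub this]
        ring
      rw [hσc]; ring_nf
      omega
    have hsub : (Finset.univ.map ⟨Sum.inr, Sum.inr_injective⟩ :
        Finset (ZMod m ⊕ ZMod (m+1))) ⊆
        Finset.univ.filter (fun v => 1 ≤ ∑ u ∈ Finset.univ.filter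
          (fun u => u = v ∨ (GB m σ).Adj v u), f₀ u) := by
      intro u hu
      rw [Finset.mem_map] at hu
      obtain ⟨x, _, rfl⟩ := hu
      rw [Finset.mem_filter]
      exact ⟨Finset.mem_univ _, key x⟩
    have hcard := Finset.card_le_card hsub
    rw [Finset.card_map] at hcard
    simp only [Finset.card_univ, ZMod.card] at hcard
    omega

/-! ### Construction A: the complete graph, for `d = n` -/

def GA (t : ℕ) : SimpleGraph (ZMod t) where
  Adj u v := u ≠ v
  symm := ⟨fun u v h => fun hc => h hc.symm⟩
  loopless := ⟨fun u h => h rfl⟩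

lemma memA (m : ℕ) :
    ∃ (G : SimpleGraph (Fin (2*m+1))) (f : Fin (2*m+1) → ℤ),
      IsConfig (2*m+1) (m+1) G f ∧ IsApproving G f := by
  haveI : NeZero (2*m+1) := ⟨by omega⟩
  have hkm : m + 1 ≤ 2*m+1 := by omega
  have hall : ∀ v u : ZMod (2*m+1), u = v ∨ (GA (2*m+1)).Adj v u := by
    intro v u
    rcases eq_or_ne u v with h | h
    · exact Or.inl h
    · exact Or.inr (show v ≠ u from fun hc => h hc.symm)
  refine mem_configSet ?_ (GA (2*m+1)) (happyFun (2*m+1) (m+1)) ?_ ?_ ?_ ?_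
  · simp [ZMod.card]
  · intro v
    rw [Finset.filter_true_of_mem (fun u _ => hall v u)]
    simp [ZMod.card]
  · intro v
    unfold happyFun
    split
    · left; rfl
    · right; rfl
  · exact happyFun_count (2*m+1) (m+1) hkm
  · have key : ∀ v : ZMod (2*m+1),
        1 ≤ ∑ u ∈ Finset.univ.filter
          (fun u => u = v ∨ (GA (2*m+1)).Adj v u), happyFun (2*m+1) (m+1) u := by
      intro v
      rw [Finset.filter_true_of_mem (fun u _ => hall v u)]
      rw [happyFun_sum (2*m+1) (m+1) hkm]
      push_cast
      omega
    rw [Finset.filter_true_of_mem (fun v _ => key v)]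
    simp only [Finset.card_univ, ZMod.card]
    omega

/-! ### Construction C: for `d = (n+1)/2`, `n = 4ρ+1`, `ρ ≥ 3` -/

def cycRel (ρ : ℕ) [NeZero ρ] (j j' : ZMod ρ) : Prop := j' - j = 1 ∨ j - j' = 1

abbrev VC (ρ : ℕ) : Type := (Fin (ρ+1) ⊕ ZMod ρ) ⊕ (ZMod ρ × Fin 2)

def adjC (ρ : ℕ) [NeZero ρ] : VC ρ → VC ρ → Prop
  | Sum.inl (Sum.inl i), Sum.inl (Sum.inl i') => i ≠ i'
  | Sum.inl (Sum.inl _), Sum.inl (Sum.inr _) => True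
  | Sum.inl (Sum.inr _), Sum.inl (Sum.inl _) => True
  | Sum.inl (Sum.inr j), Sum.inl (Sum.inr j') => j ≠ j' ∧ ¬ cycRel ρ j j'
  | Sum.inl (Sum.inl _), Sum.inr _ => False
  | Sum.inr _, Sum.inl (Sum.inl _) => False
  | Sum.inl (Sum.inr j), Sum.inr q => q.1 = j
  | Sum.inr q, Sum.inl (Sum.inr j) => q.1 = j
  | Sum.inr q, Sum.inr q' => q ≠ q'

def GC (ρ : ℕ) [NeZero ρ] : SimpleGraph (VC ρ) where
  Adj := adjC ρ
  symm := by
    constructor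
    rintro ((i|j)|q) ((i'|j')|q') h <;> simp only [adjC] at h ⊢
    · exact fun hc => h hc.symm
    · rcases h with ⟨h1, h2⟩
      refine ⟨fun hc => h1 hc.symm, fun hc => h2 ?_⟩
      unfold cycRel at hc ⊢
      tauto
    · exact h
    · exact h
    · exact fun hc => h hc.symm
  loopless := by
    constructor
    rintro ((i|j)|q) h <;> simp only [adjC] at h
    · exact h rfl
    · exact h.1 rfl
    · exact h rfl

lemma zmod_cyc_coball (ρ : ℕ) [NeZero ρ] (hρ : 3 ≤ ρ) (j : ZMod ρ) :
    (Finset.univ.filter fun j' : ZMod ρ =>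
      j' = j ∨ (j ≠ j' ∧ ¬ cycRel ρ j j')).card = ρ - 2 := by
  have h1 : (1 : ZMod ρ) ≠ 0 := by
    intro hc
    have hv : ((1:ℕ) : ZMod ρ).val = 1 := ZMod.val_cast_of_lt (by omega)
    rw [Nat.cast_one, hc, ZMod.val_zero] at hv
    omega
  have h2 : (2 : ZMod ρ) ≠ 0 := by
    intro hc
    have hv : ((2:ℕ) : ZMod ρ).val = 2 := ZMod.val_cast_of_lt (by omega)
    rw [Nat.cast_two, hc, ZMod.val_zero] at hv
    omega
  have hneg : (Finset.univ.filter fun j' : ZMod ρ =>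
      ¬(j' = j ∨ (j ≠ j' ∧ ¬ cycRel ρ j j'))) = {j + 1, j - 1} := by
    ext j'
    simp only [Finset.mem_filter, Finset.mem_univ, true_and, not_or, not_and, not_not,
      Finset.mem_insert, Finset.mem_singleton]
    constructor
    · rintro ⟨hne, himp⟩
      have hcyc : cycRel ρ j j' := himp (fun hc => hne hc.symm)
      rcases hcyc with hc | hc
      · left; rw [sub_eq_iff_eq_add] at hc; rw [hc]; ring
      · right
        rw [sub_eq_iff_eq_add] at hc
        rw [hc]; ring
    · rintro (rfl | rfl)
      · constructor
        · intro hc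
          apply h1
          have : j + 1 - j = 0 := by rw [hc]; ring
          calc (1 : ZMod ρ) = j + 1 - j := by ring
          _ = 0 := this
        · intro _
          left
          ring
      · constructor
        · intro hc
          refine absurd ?_ h1
          calc (1 : ZMod ρ) = j - (j-1) := by ring
          _ = j - j := by rw [hc]
          _ = 0 := by ring
        · intro _
          right
          ring
  have hpair : ({j + 1, j - 1} : Finset (ZMod ρ)).card = 2 := by
    rw [Finset.card_insert_of_notMem, Finset.card_singleton]
    simp only [Finset.mem_singleton]
    intro hc
    apply h2
    have : (j+1) - (j-1) = 0 := by rw [hc]; ring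
    calc (2 : ZMod ρ) = (j+1) - (j-1) := by ring
    _ = 0 := this
  have hsplit := Finset.card_filter_add_card_filter_not
    (s := (Finset.univ : Finset (ZMod ρ)))
    (p := fun j' : ZMod ρ => j' = j ∨ (j ≠ j' ∧ ¬ cycRel ρ j j'))
  rw [hneg, hpair] at hsplit
  have hcardu : (Finset.univ : Finset (ZMod ρ)).card = ρ := by simp [ZMod.card]
  omega

lemma card_filter_prod_fst {α β : Type*} [Fintype α] [Fintype β] [DecidableEq α] (a : α) :
    (Finset.univ.filter fun q : α × β => q.1 = a).card = Fintype.card β := by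
  rw [← Finset.card_univ]
  refine Finset.card_bij' (fun q _ => q.2) (fun b _ => (a, b)) ?_ ?_ ?_ ?_
  · intro q _; exact Finset.mem_univ _
  · intro b _
    simp only [Finset.mem_filter, Finset.mem_univ, true_and]
  · intro q hq
    simp only [Finset.mem_filter] at hq
    exact Prod.ext hq.2.symm rfl
  · intro b _; rfl

noncomputable def fC (ρ : ℕ) [NeZero ρ] : VC ρ → ℤ :=
  Sum.elim (Sum.elim (fun _ => 1) (fun _ => -1)) (fun _ => -1)

lemma memC (ρ : ℕ) (hρ : 3 ≤ ρ) :
    ∃ (G : SimpleGraph (Fin (4*ρ+1))) (f : Fin (4*ρ+1) → ℤ),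
      IsConfig (2*ρ+1) (ρ+1) G f ∧ IsApproving G f := by
  haveI : NeZero ρ := ⟨by omega⟩
  refine mem_configSet ?_ (GC ρ) (fC ρ) ?_ ?_ ?_ ?_
  · simp [ZMod.card]
    omega
  · -- degrees
    intro v
    have hsplit : (Finset.univ.filter fun u => u = v ∨ (GC ρ).Adj v u).card
        = (Finset.univ.filter fun p : Fin (ρ+1) ⊕ ZMod ρ =>
            (Sum.inl p : VC ρ) = v ∨ (GC ρ).Adj v (Sum.inl p)).card
          + (Finset.univ.filter fun q : ZMod ρ × Fin 2 =>
            (Sum.inr q : VC ρ) = v ∨ (GC ρ).Adj v (Sum.inr q)).card := by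
      exact card_filter_sum_type _
    have hsplit2 : (Finset.univ.filter fun p : Fin (ρ+1) ⊕ ZMod ρ =>
          (Sum.inl p : VC ρ) = v ∨ (GC ρ).Adj v (Sum.inl p)).card
        = (Finset.univ.filter fun i : Fin (ρ+1) =>
            (Sum.inl (Sum.inl i) : VC ρ) = v ∨ (GC ρ).Adj v (Sum.inl (Sum.inl i))).card
          + (Finset.univ.filter fun j : ZMod ρ =>
            (Sum.inl (Sum.inr j) : VC ρ) = v ∨ (GC ρ).Adj v (Sum.inl (Sum.inr j))).card := by
      exact card_filter_sum_type _
    rw [hsplit, hsplit2]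
    rcases v with (i | j) | q
    · -- v = H vertex
      have e1 : (Finset.univ.filter fun i' : Fin (ρ+1) =>
          (Sum.inl (Sum.inl i') : VC ρ) = Sum.inl (Sum.inl i)
            ∨ (GC ρ).Adj (Sum.inl (Sum.inl i)) (Sum.inl (Sum.inl i'))).card = ρ + 1 := by
        rw [Finset.filter_true_of_mem (fun i' _ => by
          rcases eq_or_ne i' i with h | h
          · exact Or.inl (by rw [h])
          · exact Or.inr (show i ≠ i' from fun hc => h hc.symm))]
        simp
      have e2 : (Finset.univ.filter fun j : ZMod ρ =>
          (Sum.inl (Sum.inr j) : VC ρ) = Sum.inl (Sum.inl i)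
            ∨ (GC ρ).Adj (Sum.inl (Sum.inl i)) (Sum.inl (Sum.inr j))).card = ρ := by
        have htrue : ∀ j' ∈ (Finset.univ : Finset (ZMod ρ)),
            (Sum.inl (Sum.inr j') : VC ρ) = Sum.inl (Sum.inl i)
              ∨ (GC ρ).Adj (Sum.inl (Sum.inl i)) (Sum.inl (Sum.inr j')) :=
          fun j' _ => Or.inr trivial
        rw [Finset.filter_true_of_mem htrue]
        simp [ZMod.card]
      have e3 : (Finset.univ.filter fun q : ZMod ρ × Fin 2 =>
          (Sum.inr q : VC ρ) = Sum.inl (Sum.inl i)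
            ∨ (GC ρ).Adj (Sum.inl (Sum.inl i)) (Sum.inr q)).card = 0 := by
        rw [Finset.filter_false_of_mem (fun q _ => by
          rintro (h | h)
          · exact absurd h (by simp)
          · exact h)]
        simp
      rw [e1, e2, e3]
      omega
    · -- v = R vertex
      have e1 : (Finset.univ.filter fun i' : Fin (ρ+1) =>
          (Sum.inl (Sum.inl i') : VC ρ) = Sum.inl (Sum.inr j)
            ∨ (GC ρ).Adj (Sum.inl (Sum.inr j)) (Sum.inl (Sum.inl i'))).card = ρ + 1 := by
        have htrue : ∀ i' ∈ (Finset.univ : Finset (Fin (ρ+1))),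
            (Sum.inl (Sum.inl i') : VC ρ) = Sum.inl (Sum.inr j)
              ∨ (GC ρ).Adj (Sum.inl (Sum.inr j)) (Sum.inl (Sum.inl i')) :=
          fun i' _ => Or.inr trivial
        rw [Finset.filter_true_of_mem htrue]
        simp
      have e2 : (Finset.univ.filter fun j' : ZMod ρ =>
          (Sum.inl (Sum.inr j') : VC ρ) = Sum.inl (Sum.inr j)
            ∨ (GC ρ).Adj (Sum.inl (Sum.inr j)) (Sum.inl (Sum.inr j'))).card = ρ - 2 := by
        refine (card_filter_congr _ _ ?_).trans (zmod_cyc_coball ρ hρ j)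
        intro j'
        constructor
        · rintro (h | h)
          · left; exact Sum.inr.inj (Sum.inl.inj h)
          · right; exact h
        · rintro (rfl | h)
          · left; rfl
          · right; exact h
      have e3 : (Finset.univ.filter fun q : ZMod ρ × Fin 2 =>
          (Sum.inr q : VC ρ) = Sum.inl (Sum.inr j)
            ∨ (GC ρ).Adj (Sum.inl (Sum.inr j)) (Sum.inr q)).card = 2 := by
        have : Fintype.card (Fin 2) = 2 := by simp
        refine ((card_filter_congr _ _ ?_).trans (card_filter_prod_fst j)).trans this
        intro q
        constructor
        · rintro (h | h)
          · exact absurd h (by simp)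
          · exact h
        · intro h; exact Or.inr h
      rw [e1, e2, e3]
      omega
    · -- v = Q vertex
      have e1 : (Finset.univ.filter fun i' : Fin (ρ+1) =>
          (Sum.inl (Sum.inl i') : VC ρ) = Sum.inr q
            ∨ (GC ρ).Adj (Sum.inr q) (Sum.inl (Sum.inl i'))).card = 0 := by
        rw [Finset.filter_false_of_mem (fun i' _ => by
          rintro (h | h)
          · exact absurd h (by simp)
          · exact h)]
        simp
      have e2 : (Finset.univ.filter fun j' : ZMod ρ =>
          (Sum.inl (Sum.inr j') : VC ρ) = Sum.inr q
            ∨ (GC ρ).Adj (Sum.inr q) (Sum.inl (Sum.inr j'))).card = 1 := by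
      -- pred iff j' = q.1
        have heq : (Finset.univ.filter fun j' : ZMod ρ =>
            (Sum.inl (Sum.inr j') : VC ρ) = Sum.inr q
              ∨ (GC ρ).Adj (Sum.inr q) (Sum.inl (Sum.inr j'))) = {q.1} := by
          ext j'
          simp only [Finset.mem_filter, Finset.mem_univ, true_and, Finset.mem_singleton]
          constructor
          · rintro (h | h)
            · exact absurd h (by simp)
            · exact (show q.1 = j' from h).symm
          · rintro rfl
            exact Or.inr rfl
        rw [heq]
        simp
      have e3 : (Finset.univ.filter fun q' : ZMod ρ × Fin 2 =>
          (Sum.inr q' : VC ρ) = Sum.inr q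
            ∨ (GC ρ).Adj (Sum.inr q) (Sum.inr q')).card = 2 * ρ := by
        rw [Finset.filter_true_of_mem (fun q' _ => by
          rcases eq_or_ne q' q with h | h
          · exact Or.inl (by rw [h])
          · exact Or.inr (show q ≠ q' from fun hc => h hc.symm))]
        simp [ZMod.card]
        omega
      rw [e1, e2, e3]
      omega
  · rintro ((i | j) | q)
    · left; rfl
    · right; rfl
    · right; rfl
  · -- happy count
    have hsplit : (Finset.univ.filter fun v => fC ρ v = 1).card
        = (Finset.univ.filter fun p : Fin (ρ+1) ⊕ ZMod ρ => fC ρ (Sum.inl p) = 1).card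
          + (Finset.univ.filter fun q : ZMod ρ × Fin 2 => fC ρ (Sum.inr q) = 1).card := by
      exact card_filter_sum_type _
    have hsplit2 : (Finset.univ.filter fun p : Fin (ρ+1) ⊕ ZMod ρ => fC ρ (Sum.inl p) = 1).card
        = (Finset.univ.filter fun i : Fin (ρ+1) => fC ρ (Sum.inl (Sum.inl i)) = 1).card
          + (Finset.univ.filter fun j : ZMod ρ => fC ρ (Sum.inl (Sum.inr j)) = 1).card := by
      exact card_filter_sum_type _
    rw [hsplit, hsplit2]
    have e1 : (Finset.univ.filter fun i : Fin (ρ+1) => fC ρ (Sum.inl (Sum.inl i)) = 1).card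
        = ρ + 1 := by
      have htrue : ∀ i ∈ (Finset.univ : Finset (Fin (ρ+1))), fC ρ (Sum.inl (Sum.inl i)) = 1 :=
        fun i _ => rfl
      rw [Finset.filter_true_of_mem htrue]
      simp
    have e2 : (Finset.univ.filter fun j : ZMod ρ => fC ρ (Sum.inl (Sum.inr j)) = 1).card = 0 := by
      rw [Finset.filter_false_of_mem (fun j _ => by
        intro h
        exact absurd h (by norm_num [fC]))]
      simp
    have e3 : (Finset.univ.filter fun q : ZMod ρ × Fin 2 => fC ρ (Sum.inr q) = 1).card = 0 := by
      rw [Finset.filter_false_of_mem (fun q _ => by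
        intro h
        exact absurd h (by norm_num [fC]))]
      simp
    rw [e1, e2, e3]
  · -- approving
    have key : ∀ p : Fin (ρ+1) ⊕ ZMod ρ,
        1 ≤ ∑ u ∈ Finset.univ.filter
          (fun u => u = (Sum.inl p : VC ρ) ∨ (GC ρ).Adj (Sum.inl p) u), fC ρ u := by
      intro p
      have hsplit : ∑ u ∈ Finset.univ.filter
            (fun u => u = (Sum.inl p : VC ρ) ∨ (GC ρ).Adj (Sum.inl p) u), fC ρ u
          = (∑ p' ∈ Finset.univ.filter (fun p' : Fin (ρ+1) ⊕ ZMod ρ =>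
              (Sum.inl p' : VC ρ) = Sum.inl p ∨ (GC ρ).Adj (Sum.inl p) (Sum.inl p')),
              fC ρ (Sum.inl p'))
            + ∑ q ∈ Finset.univ.filter (fun q : ZMod ρ × Fin 2 =>
              (Sum.inr q : VC ρ) = Sum.inl p ∨ (GC ρ).Adj (Sum.inl p) (Sum.inr q)),
              fC ρ (Sum.inr q) := by
        exact sum_filter_sum_type _ _
      have hsplit2 : ∑ p' ∈ Finset.univ.filter (fun p' : Fin (ρ+1) ⊕ ZMod ρ =>
              (Sum.inl p' : VC ρ) = Sum.inl p ∨ (GC ρ).Adj (Sum.inl p) (Sum.inl p')),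
              fC ρ (Sum.inl p')
          = (∑ i ∈ Finset.univ.filter (fun i : Fin (ρ+1) =>
              (Sum.inl (Sum.inl i) : VC ρ) = Sum.inl p
                ∨ (GC ρ).Adj (Sum.inl p) (Sum.inl (Sum.inl i))), fC ρ (Sum.inl (Sum.inl i)))
            + ∑ j ∈ Finset.univ.filter (fun j : ZMod ρ =>
              (Sum.inl (Sum.inr j) : VC ρ) = Sum.inl p
                ∨ (GC ρ).Adj (Sum.inl p) (Sum.inl (Sum.inr j))), fC ρ (Sum.inl (Sum.inr j)) := by
        exact sum_filter_sum_type _ _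
      rw [hsplit, hsplit2]
      have hconst1 : ∀ i : Fin (ρ+1), fC ρ (Sum.inl (Sum.inl i)) = 1 := fun _ => rfl
      have hconst2 : ∀ j : ZMod ρ, fC ρ (Sum.inl (Sum.inr j)) = -1 := fun _ => rfl
      have hconst3 : ∀ q : ZMod ρ × Fin 2, fC ρ (Sum.inr q) = -1 := fun _ => rfl
      rcases p with i | j
      · -- H vertex
        have s1 : ∑ i' ∈ Finset.univ.filter (fun i' : Fin (ρ+1) =>
            (Sum.inl (Sum.inl i') : VC ρ) = Sum.inl (Sum.inl i)
              ∨ (GC ρ).Adj (Sum.inl (Sum.inl i)) (Sum.inl (Sum.inl i'))),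
            fC ρ (Sum.inl (Sum.inl i')) = (ρ:ℤ) + 1 := by
          rw [Finset.sum_congr rfl (fun i' _ => hconst1 i'), Finset.sum_const,
            Finset.filter_true_of_mem (fun i' _ => by
              rcases eq_or_ne i' i with h | h
              · exact Or.inl (by rw [h])
              · exact Or.inr (show i ≠ i' from fun hc => h hc.symm))]
          simp
        have s2 : ∑ j ∈ Finset.univ.filter (fun j : ZMod ρ =>
            (Sum.inl (Sum.inr j) : VC ρ) = Sum.inl (Sum.inl i)
              ∨ (GC ρ).Adj (Sum.inl (Sum.inl i)) (Sum.inl (Sum.inr j))),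
            fC ρ (Sum.inl (Sum.inr j)) = -(ρ:ℤ) := by
          have htrue : ∀ j' ∈ (Finset.univ : Finset (ZMod ρ)),
              (Sum.inl (Sum.inr j') : VC ρ) = Sum.inl (Sum.inl i)
                ∨ (GC ρ).Adj (Sum.inl (Sum.inl i)) (Sum.inl (Sum.inr j')) :=
            fun j' _ => Or.inr trivial
          rw [Finset.sum_congr rfl (fun j _ => hconst2 j), Finset.sum_const,
            Finset.filter_true_of_mem htrue]
          simp [ZMod.card]
        have s3 : ∑ q ∈ Finset.univ.filter (fun q : ZMod ρ × Fin 2 =>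
            (Sum.inr q : VC ρ) = Sum.inl (Sum.inl i)
              ∨ (GC ρ).Adj (Sum.inl (Sum.inl i)) (Sum.inr q)), fC ρ (Sum.inr q) = 0 := by
          rw [Finset.filter_false_of_mem (fun q _ => by
            rintro (h | h)
            · exact absurd h (by simp)
            · exact h)]
          simp
        rw [s1, s2, s3]
        omega
      · -- R vertex
        have s1 : ∑ i' ∈ Finset.univ.filter (fun i' : Fin (ρ+1) =>
            (Sum.inl (Sum.inl i') : VC ρ) = Sum.inl (Sum.inr j)
              ∨ (GC ρ).Adj (Sum.inl (Sum.inr j)) (Sum.inl (Sum.inl i'))),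
            fC ρ (Sum.inl (Sum.inl i')) = (ρ:ℤ) + 1 := by
          have htrue : ∀ i' ∈ (Finset.univ : Finset (Fin (ρ+1))),
              (Sum.inl (Sum.inl i') : VC ρ) = Sum.inl (Sum.inr j)
                ∨ (GC ρ).Adj (Sum.inl (Sum.inr j)) (Sum.inl (Sum.inl i')) :=
            fun i' _ => Or.inr trivial
          rw [Finset.sum_congr rfl (fun i' _ => hconst1 i'), Finset.sum_const,
            Finset.filter_true_of_mem htrue]
          simp
        have s2 : ∑ j' ∈ Finset.univ.filter (fun j' : ZMod ρ =>
            (Sum.inl (Sum.inr j') : VC ρ) = Sum.inl (Sum.inr j)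
              ∨ (GC ρ).Adj (Sum.inl (Sum.inr j)) (Sum.inl (Sum.inr j'))),
            fC ρ (Sum.inl (Sum.inr j')) = -(((ρ:ℕ) - 2 : ℕ) : ℤ) := by
          rw [Finset.sum_congr rfl (fun j' _ => hconst2 j'), Finset.sum_const]
          have hc : (Finset.univ.filter fun j' : ZMod ρ =>
              (Sum.inl (Sum.inr j') : VC ρ) = Sum.inl (Sum.inr j)
                ∨ (GC ρ).Adj (Sum.inl (Sum.inr j)) (Sum.inl (Sum.inr j'))).card = ρ - 2 := by
            refine (card_filter_congr _ _ ?_).trans (zmod_cyc_coball ρ hρ j)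
            intro j'
            constructor
            · rintro (h | h)
              · left; exact Sum.inr.inj (Sum.inl.inj h)
              · right; exact h
            · rintro (rfl | h)
              · left; rfl
              · right; exact h
          rw [hc]
          simp
        have s3 : ∑ q ∈ Finset.univ.filter (fun q : ZMod ρ × Fin 2 =>
            (Sum.inr q : VC ρ) = Sum.inl (Sum.inr j)
              ∨ (GC ρ).Adj (Sum.inl (Sum.inr j)) (Sum.inr q)), fC ρ (Sum.inr q) = -2 := by
          rw [Finset.sum_congr rfl (fun q _ => hconst3 q), Finset.sum_const]
          have hc : (Finset.univ.filter fun q : ZMod ρ × Fin 2 =>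
              (Sum.inr q : VC ρ) = Sum.inl (Sum.inr j)
                ∨ (GC ρ).Adj (Sum.inl (Sum.inr j)) (Sum.inr q)).card = 2 := by
            have h2 : Fintype.card (Fin 2) = 2 := by simp
            refine ((card_filter_congr _ _ ?_).trans (card_filter_prod_fst j)).trans h2
            intro q
            constructor
            · rintro (h | h)
              · exact absurd h (by simp)
              · exact h
            · intro h; exact Or.inr h
          rw [hc]
          simp
        rw [s1, s2, s3]
        have : (((ρ:ℕ) - 2 : ℕ) : ℤ) = (ρ:ℤ) - 2 := by
          push_cast [Nat.cast_sub (by omega : 2 ≤ ρ)]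
          ring
        rw [this]
        ring_nf
        omega
    have hsub : (Finset.univ.map ⟨Sum.inl, Sum.inl_injective⟩ :
        Finset (VC ρ)) ⊆
        Finset.univ.filter (fun v => 1 ≤ ∑ u ∈ Finset.univ.filter
          (fun u => u = v ∨ (GC ρ).Adj v u), fC ρ u) := by
      intro u hu
      rw [Finset.mem_map] at hu
      obtain ⟨p, _, rfl⟩ := hu
      rw [Finset.mem_filter]
      exact ⟨Finset.mem_univ _, key p⟩
    have hcard := Finset.card_le_card hsub
    rw [Finset.card_map] at hcard
    simp only [Finset.card_univ, Fintype.card_sum, ZMod.card, Fintype.card_fin] at hcard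
    omega

/-! ### Exceptional constructions -/

def adj5 : Fin 5 → Fin 5 → Prop := fun u v => v = u + 1 ∨ u = v + 1

instance adj5.dec : DecidableRel adj5 := fun _ _ => inferInstanceAs (Decidable (_ ∨ _))

def G5 : SimpleGraph (Fin 5) where
  Adj := adj5
  symm := ⟨by unfold adj5; intro u v h; tauto⟩
  loopless := by
    constructor
    intro u h
    unfold adj5 at h
    rcases h with h | h <;> exact absurd h.symm (by revert u; decide)

instance G5.dec : DecidableRel G5.Adj := fun u v => inferInstanceAs (Decidable (adj5 u v))

def f5 : Fin 5 → ℤ := fun v => if v.val < 3 then 1 else -1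

lemma mem53 : ∃ (G : SimpleGraph (Fin 5)) (f : Fin 5 → ℤ),
    IsConfig 3 3 G f ∧ IsApproving G f := by
  refine mem_configSet (by simp) G5 f5 ?_ ?_ ?_ ?_
  · intro v
    rw [Finset.filter_congr_decidable]
    revert v
    decide
  · decide
  · decide
  · have h : (5:ℕ) < 2 * (Finset.univ.filter fun v : Fin 5 =>
        1 ≤ ∑ u ∈ Finset.univ.filter (fun u => u = v ∨ G5.Adj v u), f5 u).card := by decide
    convert h using 4
    rw [Finset.filter_congr_decidable]

def edges9 : List (Fin 9 × Fin 9) :=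
  [(0,1),(1,2),(2,3),(3,0),(4,0),(4,1),(4,2),(4,3),
   (5,6),(5,7),(5,8),(6,7),(6,8),(7,8),(0,5),(1,6),(2,7),(3,8)]

def adj9 : Fin 9 → Fin 9 → Prop := fun u v => (u,v) ∈ edges9 ∨ (v,u) ∈ edges9

instance adj9.dec : DecidableRel adj9 := fun _ _ => inferInstanceAs (Decidable (_ ∨ _))

def G9 : SimpleGraph (Fin 9) where
  Adj := adj9
  symm := ⟨by unfold adj9; intro u v h; tauto⟩
  loopless := ⟨by intro u; show ¬ adj9 u u; revert u; decide⟩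

instance G9.dec : DecidableRel G9.Adj := fun u v => inferInstanceAs (Decidable (adj9 u v))

def f9 : Fin 9 → ℤ := fun v => if v.val < 4 then 1 else -1

lemma mem95 : ∃ (G : SimpleGraph (Fin 9)) (f : Fin 9 → ℤ),
    IsConfig 5 4 G f ∧ IsApproving G f := by
  refine mem_configSet (by simp) G9 f9 ?_ ?_ ?_ ?_
  · intro v
    rw [Finset.filter_congr_decidable]
    revert v
    decide
  · decide
  · decide
  · have h : (9:ℕ) < 2 * (Finset.univ.filter fun v : Fin 9 =>
        1 ≤ ∑ u ∈ Finset.univ.filter (fun u => u = v ∨ G9.Adj v u), f9 u).card := by decide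
    convert h using 4
    rw [Finset.filter_congr_decidable]

/-! ### Impossibility results for the exceptional cases -/

lemma mem_closedNbhd {n : ℕ} (G : SimpleGraph (Fin n)) (u v : Fin n) :
    u ∈ closedNbhd G v ↔ (u = v ∨ G.Adj v u) := by
  unfold closedNbhd
  simp

lemma self_mem_closedNbhd {n : ℕ} (G : SimpleGraph (Fin n)) (v : Fin n) :
    v ∈ closedNbhd G v := (mem_closedNbhd G v v).mpr (Or.inl rfl)

lemma closedNbhd_comm {n : ℕ} (G : SimpleGraph (Fin n)) (u v : Fin n) :
    u ∈ closedNbhd G v ↔ v ∈ closedNbhd G u := by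
  rw [mem_closedNbhd, mem_closedNbhd]
  constructor
  · rintro (rfl | h)
    · exact Or.inl rfl
    · exact Or.inr h.symm
  · rintro (rfl | h)
    · exact Or.inl rfl
    · exact Or.inr h.symm

lemma no53 (G : SimpleGraph (Fin 5)) (f : Fin 5 → ℤ) (hc : IsConfig 3 2 G f) :
    ¬ IsApproving G f := by
  intro ha
  obtain ⟨hreg, hpm, hcount⟩ := hc
  obtain ⟨a, b, hab, hH⟩ := Finset.card_eq_two.mp hcount
  set P := Finset.univ.filter (fun v : Fin 5 => 1 ≤ ∑ u ∈ closedNbhd G v, f u) with hPdef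
  have hPcard : 3 ≤ P.card := by
    have h2 : 2 * P.card > 5 := ha
    omega
  have hprop : ∀ v ∈ P, a ∈ closedNbhd G v ∧ b ∈ closedNbhd G v := by
    intro v hv
    rw [hPdef, Finset.mem_filter] at hv
    have h1 := prop_happy ⟨hreg, hpm, hcount⟩ hv.2
    have hsub : (closedNbhd G v).filter (fun u => f u = 1) ⊆ ({a, b} : Finset (Fin 5)) := by
      rw [← hH]; exact Finset.filter_subset_filter _ (Finset.subset_univ _)
    have hpair : ({a, b} : Finset (Fin 5)).card = 2 := Finset.card_pair hab
    have heq : (closedNbhd G v).filter (fun u => f u = 1) = {a, b} :=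
      Finset.eq_of_subset_of_card_le hsub (by omega)
    constructor
    · exact Finset.filter_subset _ _ (heq ▸ (by simp : a ∈ ({a,b} : Finset (Fin 5))))
    · exact Finset.filter_subset _ _ (heq ▸ (by simp : b ∈ ({a,b} : Finset (Fin 5))))
  have hPa : P ⊆ closedNbhd G a :=
    fun v hv => (closedNbhd_comm G a v).mp (hprop v hv).1
  have hPb : P ⊆ closedNbhd G b :=
    fun v hv => (closedNbhd_comm G b v).mp (hprop v hv).2
  have hWa : P = closedNbhd G a :=
    Finset.eq_of_subset_of_card_le hPa (by rw [hreg a]; omega)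
  have hWb : P = closedNbhd G b :=
    Finset.eq_of_subset_of_card_le hPb (by rw [hreg b]; omega)
  have hcard3 : P.card = 3 := by rw [hWa]; exact hreg a
  have haP : a ∈ P := by rw [hWa]; exact self_mem_closedNbhd G a
  have hbP : b ∈ P := by rw [hWb]; exact self_mem_closedNbhd G b
  have hNw : ∀ w ∈ P, closedNbhd G w ⊆ P := by
    intro w hw
    by_cases hwa : w = a
    · rw [hwa, ← hWa]
    by_cases hwb : w = b
    · rw [hwb, ← hWb]
    have hsub2 : ({w, a, b} : Finset (Fin 5)) ⊆ closedNbhd G w := by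
      intro x hx
      simp only [Finset.mem_insert, Finset.mem_singleton] at hx
      rcases hx with rfl | rfl | rfl
      · exact self_mem_closedNbhd G x
      · exact (hprop w hw).1
      · exact (hprop w hw).2
    have hc3 : ({w, a, b} : Finset (Fin 5)).card = 3 := by
      rw [Finset.card_insert_of_notMem (by simp [hwa, hwb]), Finset.card_pair hab]
    have heqw : ({w, a, b} : Finset (Fin 5)) = closedNbhd G w :=
      Finset.eq_of_subset_of_card_le hsub2 (by rw [hreg w]; omega)
    rw [← heqw]
    intro x hx
    simp only [Finset.mem_insert, Finset.mem_singleton] at hx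
    rcases hx with rfl | rfl | rfl
    · exact hw
    · exact haP
    · exact hbP
  have hex : ∃ u, u ∉ P := by
    by_contra hno
    push_neg at hno
    have hsub5 : (Finset.univ : Finset (Fin 5)) ⊆ P := fun u _ => hno u
    have := Finset.card_le_card hsub5
    simp only [Finset.card_univ, Fintype.card_fin] at this
    omega
  obtain ⟨u, hu⟩ := hex
  have hsubu : closedNbhd G u ⊆ Finset.univ \ P := by
    intro x hx
    rw [Finset.mem_sdiff]
    exact ⟨Finset.mem_univ _, fun hxP => hu (hNw x hxP ((closedNbhd_comm G x u).mp hx))⟩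
  have hle := Finset.card_le_card hsubu
  rw [hreg u, Finset.card_sdiff_of_subset (Finset.subset_univ P)] at hle
  simp only [Finset.card_univ, Fintype.card_fin] at hle
  omega

lemma no95 (G : SimpleGraph (Fin 9)) (f : Fin 9 → ℤ) (hc : IsConfig 5 3 G f) :
    ¬ IsApproving G f := by
  intro ha
  obtain ⟨hreg, hpm, hcount⟩ := hc
  obtain ⟨a, b, c, hab, hac, hbc, hH⟩ := Finset.card_eq_three.mp hcount
  have hc3 : ({a, b, c} : Finset (Fin 9)).card = 3 := by rw [← hH]; exact hcount
  set P := Finset.univ.filter (fun v : Fin 9 => 1 ≤ ∑ u ∈ closedNbhd G v, f u) with hPdef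
  have hPcard : 5 ≤ P.card := by
    have h2 : 2 * P.card > 9 := ha
    omega
  have hprop : ∀ v ∈ P,
      a ∈ closedNbhd G v ∧ b ∈ closedNbhd G v ∧ c ∈ closedNbhd G v := by
    intro v hv
    rw [hPdef, Finset.mem_filter] at hv
    have h1 := prop_happy ⟨hreg, hpm, hcount⟩ hv.2
    have hsub : (closedNbhd G v).filter (fun u => f u = 1) ⊆ ({a, b, c} : Finset (Fin 9)) := by
      rw [← hH]; exact Finset.filter_subset_filter _ (Finset.subset_univ _)
    have heq : (closedNbhd G v).filter (fun u => f u = 1) = {a, b, c} :=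
      Finset.eq_of_subset_of_card_le hsub (by omega)
    refine ⟨?_, ?_, ?_⟩
    · exact Finset.filter_subset _ _ (heq ▸ (by simp : a ∈ ({a,b,c} : Finset (Fin 9))))
    · exact Finset.filter_subset _ _ (heq ▸ (by simp : b ∈ ({a,b,c} : Finset (Fin 9))))
    · exact Finset.filter_subset _ _ (heq ▸ (by simp : c ∈ ({a,b,c} : Finset (Fin 9))))
  have hPa : P ⊆ closedNbhd G a :=
    fun v hv => (closedNbhd_comm G a v).mp (hprop v hv).1
  have hWa : P = closedNbhd G a :=
    Finset.eq_of_subset_of_card_le hPa (by rw [hreg a]; omega)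
  have hcard5 : P.card = 5 := by rw [hWa]; exact hreg a
  -- H ⊆ P
  have haP : a ∈ P := by rw [hWa]; exact self_mem_closedNbhd G a
  have hbP : b ∈ P := by
    have hPb : P ⊆ closedNbhd G b := fun v hv => (closedNbhd_comm G b v).mp (hprop v hv).2.1
    have hWb : P = closedNbhd G b := Finset.eq_of_subset_of_card_le hPb (by rw [hreg b]; omega)
    rw [hWb]; exact self_mem_closedNbhd G b
  have hcP : c ∈ P := by
    have hPc : P ⊆ closedNbhd G c := fun v hv => (closedNbhd_comm G c v).mp (hprop v hv).2.2
    have hWc : P = closedNbhd G c := Finset.eq_of_subset_of_card_le hPc (by rw [hreg c]; omega)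
    rw [hWc]; exact self_mem_closedNbhd G c
  -- the two other members of P
  have hHP : ({a, b, c} : Finset (Fin 9)) ⊆ P := by
    intro x hx
    simp only [Finset.mem_insert, Finset.mem_singleton] at hx
    rcases hx with rfl | rfl | rfl
    · exact haP
    · exact hbP
    · exact hcP
  have hW'card : (P \ {a, b, c}).card = 2 := by
    rw [Finset.card_sdiff_of_subset hHP]
    omega
  obtain ⟨w1, w2, hw12, hW'⟩ := Finset.card_eq_two.mp hW'card
  -- every x ∈ {a,b,c} has closed nbhd = P, so any vertex outside P is not adjacent to a,b,c
  have hNx : ∀ x ∈ ({a, b, c} : Finset (Fin 9)), closedNbhd G x = P := by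
    intro x hx
    simp only [Finset.mem_insert, Finset.mem_singleton] at hx
    rcases hx with rfl | rfl | rfl
    · exact hWa.symm
    · have hPb : P ⊆ closedNbhd G x := fun v hv => (closedNbhd_comm G x v).mp (hprop v hv).2.1
      exact (Finset.eq_of_subset_of_card_le hPb (by rw [hreg x]; omega)).symm
    · have hPc : P ⊆ closedNbhd G x := fun v hv => (closedNbhd_comm G x v).mp (hprop v hv).2.2
      exact (Finset.eq_of_subset_of_card_le hPc (by rw [hreg x]; omega)).symm
  -- each wi has {wi, a, b, c} inside its closed neighborhood
  have hwP : ∀ w ∈ (P \ ({a, b, c} : Finset (Fin 9))),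
      ({w, a, b, c} : Finset (Fin 9)) ⊆ closedNbhd G w ∧
      ({w, a, b, c} : Finset (Fin 9)).card = 4 := by
    intro w hw
    rw [Finset.mem_sdiff] at hw
    constructor
    · intro x hx
      simp only [Finset.mem_insert, Finset.mem_singleton] at hx
      rcases hx with rfl | rfl | rfl | rfl
      · exact self_mem_closedNbhd G x
      · exact (hprop w hw.1).1
      · exact (hprop w hw.1).2.1
      · exact (hprop w hw.1).2.2
    · have hwabc : w ∉ ({a, b, c} : Finset (Fin 9)) := hw.2
      simp only [Finset.mem_insert, Finset.mem_singleton, not_or] at hwabc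
      rw [Finset.card_insert_of_notMem (by simp [hwabc.1, hwabc.2.1, hwabc.2.2])]
      omega
  -- outside vertices
  set O := Finset.univ \ P with hOdef
  have hOcard : O.card = 4 := by
    rw [hOdef, Finset.card_sdiff_of_subset (Finset.subset_univ P)]
    simp [hcard5]
  -- every outside vertex is adjacent to w1 or w2
  have hOsub : O ⊆ (closedNbhd G w1 ∩ O) ∪ (closedNbhd G w2 ∩ O) := by
    intro u hu
    rw [hOdef, Finset.mem_sdiff] at hu
    -- N[u] avoids {a,b,c}
    have hNu : closedNbhd G u ⊆ (Finset.univ \ ({a,b,c} : Finset (Fin 9))) := by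
      intro x hx
      rw [Finset.mem_sdiff]
      refine ⟨Finset.mem_univ _, fun hxH => ?_⟩
      have : u ∈ closedNbhd G x := (closedNbhd_comm G x u).mp hx
      rw [hNx x hxH] at this
      exact hu.2 this
    -- N[u] cannot fit inside O ∪ ... must meet P \ {a,b,c}
    have hmeet : ∃ w ∈ (P \ ({a,b,c} : Finset (Fin 9))), w ∈ closedNbhd G u := by
      by_contra hno
      push_neg at hno
      have hsubO : closedNbhd G u ⊆ O := by
        intro x hx
        rw [hOdef, Finset.mem_sdiff]
        refine ⟨Finset.mem_univ _, fun hxP => ?_⟩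
        have hxnH : x ∉ ({a,b,c} : Finset (Fin 9)) := by
          intro hxH
          have := hNu hx
          rw [Finset.mem_sdiff] at this
          exact this.2 hxH
        exact hno x (Finset.mem_sdiff.mpr ⟨hxP, hxnH⟩) hx
      have := Finset.card_le_card hsubO
      rw [hreg u, hOcard] at this
      omega
    obtain ⟨w, hwmem, hwadj⟩ := hmeet
    have hw12' : w = w1 ∨ w = w2 := by
      have : w ∈ ({w1, w2} : Finset (Fin 9)) := hW' ▸ hwmem
      simpa using this
    have humem : u ∈ O := by
      rw [hOdef, Finset.mem_sdiff]; exact ⟨Finset.mem_univ _, hu.2⟩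
    rcases hw12' with rfl | rfl
    · exact Finset.mem_union_left _ (Finset.mem_inter.mpr
        ⟨(closedNbhd_comm G w u).mp hwadj, humem⟩)
    · exact Finset.mem_union_right _ (Finset.mem_inter.mpr
        ⟨(closedNbhd_comm G w u).mp hwadj, humem⟩)
  -- but each N[wi] ∩ O has at most one element
  have hsmall : ∀ w ∈ (P \ ({a, b, c} : Finset (Fin 9))),
      (closedNbhd G w ∩ O).card ≤ 1 := by
    intro w hw
    obtain ⟨hsubw, hcard4⟩ := hwP w hw
    have hdisj : (closedNbhd G w ∩ O) ⊆ closedNbhd G w \ ({w, a, b, c} : Finset (Fin 9)) := by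
      intro x hx
      rw [Finset.mem_inter] at hx
      rw [Finset.mem_sdiff]
      refine ⟨hx.1, fun hxS => ?_⟩
      have hxO := hx.2
      rw [hOdef, Finset.mem_sdiff] at hxO
      apply hxO.2
      simp only [Finset.mem_insert, Finset.mem_singleton] at hxS
      rcases hxS with rfl | rfl | rfl | rfl
      · exact (Finset.mem_sdiff.mp hw).1
      · exact haP
      · exact hbP
      · exact hcP
    have := Finset.card_le_card hdisj
    rw [Finset.card_sdiff_of_subset hsubw, hreg w, hcard4] at this
    omega
  have hw1mem : w1 ∈ P \ ({a,b,c} : Finset (Fin 9)) := by rw [hW']; simp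
  have hw2mem : w2 ∈ P \ ({a,b,c} : Finset (Fin 9)) := by rw [hW']; simp
  have hfinal := Finset.card_le_card hOsub
  have hunion := Finset.card_union_le (closedNbhd G w1 ∩ O) (closedNbhd G w2 ∩ O)
  have h1 := hsmall w1 hw1mem
  have h2 := hsmall w2 hw2mem
  omega


/-- for high-degree classes, `hmin(n,d) = (d+1)/2` plus an indicator of
the two exceptions `(5,3)` and `(9,5)` (where it is `3` and `4`, respectively). -/
theorem stmt9 (n d : ℕ) (hn : Odd n) (hd : Odd d) (hnpos : 0 < n) (hdpos : 0 < d)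
    (hhigh : (n + 1) / 2 ≤ d) (hdn : d ≤ n) :
    hmin n d = (d + 1) / 2 + (if (n = 5 ∧ d = 3) ∨ (n = 9 ∧ d = 5) then 1 else 0) := by
  by_cases hexc : (n = 5 ∧ d = 3) ∨ (n = 9 ∧ d = 5)
  · rw [if_pos hexc]
    rcases hexc with ⟨rfl, rfl⟩ | ⟨rfl, rfl⟩
    · -- (5,3) : hmin = 3
      have hmem : 3 ∈ {h : ℕ | ∃ (G : SimpleGraph (Fin 5)) (f : Fin 5 → ℤ),
          IsConfig 3 h G f ∧ IsApproving G f} := mem53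
      have hle : hmin 5 3 ≤ 3 := Nat.sInf_le hmem
      have hge : 3 ≤ hmin 5 3 := by
        apply le_csInf ⟨3, hmem⟩
        rintro h ⟨G, f, hc, ha⟩
        have h2 := lower_bound (by norm_num) hc ha
        rcases Nat.lt_or_ge h 3 with hlt | hge
        · have he : h = 2 := by omega
          subst he
          exact absurd ha (no53 G f hc)
        · exact hge
      omega
    · -- (9,5) : hmin = 4
      have hmem : 4 ∈ {h : ℕ | ∃ (G : SimpleGraph (Fin 9)) (f : Fin 9 → ℤ),
          IsConfig 5 h G f ∧ IsApproving G f} := mem95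
      have hle : hmin 9 5 ≤ 4 := Nat.sInf_le hmem
      have hge : 4 ≤ hmin 9 5 := by
        apply le_csInf ⟨4, hmem⟩
        rintro h ⟨G, f, hc, ha⟩
        have h2 := lower_bound (by norm_num) hc ha
        rcases Nat.lt_or_ge h 4 with hlt | hge
        · have he : h = 3 := by omega
          subst he
          exact absurd ha (no95 G f hc)
        · exact hge
      omega
  · rw [if_neg hexc]
    obtain ⟨m, hm⟩ := hn
    obtain ⟨c, hcd⟩ := hd
    have hm' : n = 2*m+1 := by omega
    have hcd' : d = 2*c+1 := by omega
    subst hm' hcd'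
    have htgt : (2*c+1+1)/2 + 0 = c + 1 := by omega
    rw [htgt]
    have hmem : (c+1) ∈ {h : ℕ | ∃ (G : SimpleGraph (Fin (2*m+1))) (f : Fin (2*m+1) → ℤ),
        IsConfig (2*c+1) h G f ∧ IsApproving G f} := by
      by_cases hcm : c = m
      · subst hcm
        exact memA c
      · by_cases hm2 : m = 2*c
        · have hc3 : 3 ≤ c := by
            -- exclude the exceptional and degenerate cases
            rcases Nat.lt_or_ge c 3 with hlt | hge
            · exfalso
              interval_cases c
              · omega
              · exact hexc (Or.inl ⟨by omega, by omega⟩)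
              · exact hexc (Or.inr ⟨by omega, by omega⟩)
            · exact hge
          subst hm2
          show ∃ (G : SimpleGraph (Fin (2*(2*c)+1))) (f : Fin (2*(2*c)+1) → ℤ),
            IsConfig (2*c+1) (c+1) G f ∧ IsApproving G f
          have h41 : 2*(2*c)+1 = 4*c+1 := by ring
          rw [h41]
          exact memC c hc3
        · refine memB m c ?_ ?_ ?_
          · omega
          · omega
          · omega
    have hle : hmin (2*m+1) (2*c+1) ≤ c+1 := Nat.sInf_le hmem
    have hge : c+1 ≤ hmin (2*m+1) (2*c+1) := by
      apply le_csInf ⟨c+1, hmem⟩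
      rintro h ⟨G, f, hc, ha⟩
      have h2 := lower_bound (by omega) hc ha
      omega
    omega
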